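/- Let 𝒜 be a real or complex Banach algebra and A, B ∈ 𝒜, and let ε be a scalar. Then the family of terms (ε^k / k!) · A^{k−α} · B · (A+B)^{α−1}, indexed by pairs (k, α) with 1 ≤ α ≤ k, is summable, and exp(ε(A+B)) = exp(εA) + Σ_{α=1}^{∞} Σ_{k=α}^{∞} (ε^k / k!) · A^{k−α} · B · (A+B)^{α−1}. -/

import Mathlib

open Finset

lemma groebner_pow_sub_pow {𝒜 : Type*} [Ring 𝒜] (A B : 𝒜) (k : ℕ) :
    (A + B) ^ k - A ^ k = ∑ i ∈ Finset.range k, A ^ (k - 1 - i) * B * (A + B) ^ i := by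
  induction k with
  | zero => simp
  | succ k ih =>
    rw [Finset.sum_range_succ]
    have h1 : ∀ i ∈ Finset.range k, A ^ (k + 1 - 1 - i) * B * (A + B) ^ i
        = A * (A ^ (k - 1 - i) * B * (A + B) ^ i) := by
      intro i hi
      rw [Finset.mem_range] at hi
      rw [show k + 1 - 1 - i = (k - 1 - i) + 1 from by omega, pow_succ', mul_assoc, mul_assoc,
        mul_assoc]
    rw [Finset.sum_congr rfl h1, ← Finset.mul_sum, ← ih]
    have : k + 1 - 1 - k = 0 := by omega
    rw [this, pow_zero, pow_succ' (A + B), pow_succ' A]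
    noncomm_ring

lemma groebner_norm_pow_le {𝒜 : Type*} [NormedRing 𝒜] (A : 𝒜) (j : ℕ) :
    ‖A ^ j‖ ≤ (‖(1 : 𝒜)‖ + 1) * ‖A‖ ^ j := by
  cases j with
  | zero => simp
  | succ m =>
    calc ‖A ^ (m + 1)‖ ≤ ‖A‖ ^ (m + 1) := norm_pow_le' A (Nat.succ_pos m)
      _ ≤ (‖(1 : 𝒜)‖ + 1) * ‖A‖ ^ (m + 1) := by
          nlinarith [pow_nonneg (norm_nonneg A) (m + 1), norm_nonneg (1 : 𝒜)]

set_option maxHeartbeats 1600000 in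
/-- Gröbner's formula for the Lie series in a Banach algebra: the family
`(ε^k / k!) • A^{k-α} * B * (A+B)^{α-1}` (for `1 ≤ α ≤ k`) is summable, and
`exp(ε(A+B)) = exp(εA) + ∑_{α=1}^∞ ∑_{k=α}^∞ (ε^k / k!) • A^{k-α} * B * (A+B)^{α-1}`. -/
theorem groebner_exp_decomposition
    {𝕜 : Type*} [RCLike 𝕜] {𝒜 : Type*} [NormedRing 𝒜] [NormedAlgebra 𝕜 𝒜]
    [CompleteSpace 𝒜] (A B : 𝒜) (ε : 𝕜) :
    Summable (fun p : {q : ℕ × ℕ // 1 ≤ q.2 ∧ q.2 ≤ q.1} =>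
      (ε ^ p.1.1 / (Nat.factorial p.1.1 : 𝕜)) •
        (A ^ (p.1.1 - p.1.2) * B * (A + B) ^ (p.1.2 - 1))) ∧
    NormedSpace.exp (ε • (A + B)) =
      NormedSpace.exp (ε • A) +
        ∑' (α : {n : ℕ // 1 ≤ n}), ∑' (k : {k : ℕ // (α : ℕ) ≤ k}),
          (ε ^ (k : ℕ) / (Nat.factorial (k : ℕ) : 𝕜)) •
            (A ^ ((k : ℕ) - (α : ℕ)) * B * (A + B) ^ ((α : ℕ) - 1)) := by
  classical
  set r := ‖ε‖ with hr
  set C1 := ‖(1 : 𝒜)‖ + 1 with hC1def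
  have hC1 : 0 < C1 := by positivity
  set F : ℕ × ℕ → 𝒜 := fun p =>
    (ε ^ (p.1 + p.2 + 1) / (Nat.factorial (p.1 + p.2 + 1) : 𝕜)) •
      (A ^ p.2 * B * (A + B) ^ p.1) with hFdef
  -- summable majorant
  have hg : Summable (fun p : ℕ × ℕ =>
      (C1 * C1 * ‖B‖ * r) * ((r * ‖A + B‖) ^ p.1 / (Nat.factorial p.1 : ℝ) *
        ((r * ‖A‖) ^ p.2 / (Nat.factorial p.2 : ℝ)))) := by
    have h := (Real.summable_pow_div_factorial (r * ‖A + B‖)).mul_of_nonneg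
      (Real.summable_pow_div_factorial (r * ‖A‖))
      (fun n => by positivity) (fun n => by positivity)
    exact h.mul_left _
  have key : ∀ p : ℕ × ℕ, ‖F p‖ ≤
      (C1 * C1 * ‖B‖ * r) * ((r * ‖A + B‖) ^ p.1 / (Nat.factorial p.1 : ℝ) *
        ((r * ‖A‖) ^ p.2 / (Nat.factorial p.2 : ℝ))) := by
    rintro ⟨i, j⟩
    have hfac : ((Nat.factorial i : ℝ) * (Nat.factorial j : ℝ)) ≤
        (Nat.factorial (i + j + 1) : ℝ) := by
      have h1 : Nat.factorial i * Nat.factorial j ∣ Nat.factorial (i + j) :=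
        Nat.factorial_mul_factorial_dvd_factorial_add i j
      have h2 : Nat.factorial i * Nat.factorial j ≤ Nat.factorial (i + j) :=
        Nat.le_of_dvd (Nat.factorial_pos _) h1
      have h3 : Nat.factorial (i + j) ≤ Nat.factorial (i + j + 1) :=
        Nat.factorial_le (by omega)
      exact_mod_cast le_trans h2 h3
    have hnorm : ‖F (i, j)‖ =
        (r ^ (i + j + 1) / (Nat.factorial (i + j + 1) : ℝ)) *
          ‖A ^ j * B * (A + B) ^ i‖ := by
      rw [hFdef]
      simp only [norm_smul, norm_div, norm_pow, RCLike.norm_natCast, hr]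
    rw [hnorm]
    have hb1 : ‖A ^ j * B * (A + B) ^ i‖ ≤
        (C1 * ‖A‖ ^ j) * ‖B‖ * (C1 * ‖A + B‖ ^ i) := by
      calc ‖A ^ j * B * (A + B) ^ i‖ ≤ ‖A ^ j * B‖ * ‖(A + B) ^ i‖ := norm_mul_le _ _
        _ ≤ ‖A ^ j‖ * ‖B‖ * ‖(A + B) ^ i‖ := by
            gcongr
            exact norm_mul_le _ _
        _ ≤ (C1 * ‖A‖ ^ j) * ‖B‖ * (C1 * ‖A + B‖ ^ i) := by
            gcongr
            · exact groebner_norm_pow_le A j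
            · exact groebner_norm_pow_le (A + B) i
    have hb2 : r ^ (i + j + 1) / (Nat.factorial (i + j + 1) : ℝ) ≤
        r ^ (i + j + 1) / ((Nat.factorial i : ℝ) * (Nat.factorial j : ℝ)) := by
      gcongr
    calc (r ^ (i + j + 1) / (Nat.factorial (i + j + 1) : ℝ)) * ‖A ^ j * B * (A + B) ^ i‖
        ≤ (r ^ (i + j + 1) / ((Nat.factorial i : ℝ) * (Nat.factorial j : ℝ))) *
            ((C1 * ‖A‖ ^ j) * ‖B‖ * (C1 * ‖A + B‖ ^ i)) := by
          apply mul_le_mul hb2 hb1 (norm_nonneg _) (by positivity)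
      _ = (C1 * C1 * ‖B‖ * r) * ((r * ‖A + B‖) ^ i / (Nat.factorial i : ℝ) *
            ((r * ‖A‖) ^ j / (Nat.factorial j : ℝ))) := by
          rw [mul_pow, mul_pow, pow_add, pow_add, pow_one]
          have hi : (Nat.factorial i : ℝ) ≠ 0 := by positivity
          have hj : (Nat.factorial j : ℝ) ≠ 0 := by positivity
          field_simp
  have hF : Summable F := Summable.of_norm_bounded hg key
  -- the equivalence with the subtype index
  let e : ℕ × ℕ ≃ {q : ℕ × ℕ // 1 ≤ q.2 ∧ q.2 ≤ q.1} :=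
  { toFun := fun p => ⟨(p.1 + p.2 + 1, p.1 + 1), by constructor <;> omega⟩
    invFun := fun q => (q.1.2 - 1, q.1.1 - q.1.2)
    left_inv := fun p => by
      obtain ⟨i, j⟩ := p
      simp only [Prod.mk.injEq]
      omega
    right_inv := fun q => by
      obtain ⟨⟨k, α⟩, h1, h2⟩ := q
      apply Subtype.ext
      simp only [Prod.mk.injEq]
      omega }
  have hcomp : ∀ p : ℕ × ℕ,
      F p = (ε ^ (e p).1.1 / (Nat.factorial (e p).1.1 : 𝕜)) •
        (A ^ ((e p).1.1 - (e p).1.2) * B * (A + B) ^ ((e p).1.2 - 1)) := by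
    rintro ⟨i, j⟩
    show (ε ^ (i + j + 1) / (Nat.factorial (i + j + 1) : 𝕜)) • (A ^ j * B * (A + B) ^ i) =
      (ε ^ (i + j + 1) / (Nat.factorial (i + j + 1) : 𝕜)) •
        (A ^ ((i + j + 1) - (i + 1)) * B * (A + B) ^ ((i + 1) - 1))
    rw [show (i + j + 1) - (i + 1) = j from by omega, Nat.add_sub_cancel]
  have hsummable : Summable (fun p : {q : ℕ × ℕ // 1 ≤ q.2 ∧ q.2 ≤ q.1} =>
      (ε ^ p.1.1 / (Nat.factorial p.1.1 : 𝕜)) •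
        (A ^ (p.1.1 - p.1.2) * B * (A + B) ^ (p.1.2 - 1))) :=
    (Equiv.summable_iff e).mp (hF.congr hcomp)
  refine ⟨hsummable, ?_⟩
  -- expansion of the exponentials
  have hterm : ∀ (C : 𝒜) (n : ℕ), ((Nat.factorial n : 𝕜)⁻¹) • (ε • C) ^ n =
      (ε ^ n / (Nat.factorial n : 𝕜)) • C ^ n := by
    intro C n
    rw [smul_pow, smul_smul, div_eq_mul_inv, mul_comm]
  have hsum : ∀ C : 𝒜, Summable (fun n => (ε ^ n / (Nat.factorial n : 𝕜)) • C ^ n) := by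
    intro C
    simpa only [hterm] using NormedSpace.expSeries_summable' (𝕂 := 𝕜) (ε • C)
  have hexp : ∀ C : 𝒜, NormedSpace.exp (ε • C) =
      ∑' n : ℕ, (ε ^ n / (Nat.factorial n : 𝕜)) • C ^ n := by
    intro C
    simp only [NormedSpace.exp_eq_tsum 𝕜]
    exact tsum_congr (hterm C)
  have hD : Summable (fun n : ℕ => (ε ^ n / (Nat.factorial n : 𝕜)) • ((A + B) ^ n - A ^ n)) := by
    simpa only [smul_sub] using (hsum (A + B)).sub (hsum A)
  have key2 : NormedSpace.exp (ε • (A + B)) - NormedSpace.exp (ε • A) =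
      ∑' n : ℕ, (ε ^ n / (Nat.factorial n : 𝕜)) • ((A + B) ^ n - A ^ n) := by
    rw [hexp (A + B), hexp A, ← Summable.tsum_sub (hsum (A + B)) (hsum A)]
    exact tsum_congr fun n => (smul_sub _ _ _).symm
  -- regrouping ∑' p, F p by antidiagonals
  have hsigma : Summable (fun x : Σ n : ℕ, Finset.HasAntidiagonal.antidiagonal n =>
      F (Finset.HasAntidiagonal.sigmaAntidiagonalEquivProd x)) :=
    (Equiv.summable_iff _).mpr hF
  have step1 : ∑' p : ℕ × ℕ, F p = ∑' n : ℕ, ∑ p ∈ Finset.HasAntidiagonal.antidiagonal n, F p := by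
    rw [← Equiv.tsum_eq (Finset.HasAntidiagonal.sigmaAntidiagonalEquivProd (A := ℕ)) F, Summable.tsum_sigma hsigma]
    exact tsum_congr fun n => by
      rw [tsum_fintype]
      exact Finset.sum_coe_sort _ _
  have step2 : ∀ n : ℕ, ∑ p ∈ Finset.HasAntidiagonal.antidiagonal n, F p =
      (ε ^ (n + 1) / (Nat.factorial (n + 1) : 𝕜)) • ((A + B) ^ (n + 1) - A ^ (n + 1)) := by
    intro n
    rw [Finset.Nat.sum_antidiagonal_eq_sum_range_succ_mk, groebner_pow_sub_pow A B (n + 1),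
      Finset.smul_sum]
    refine Finset.sum_congr rfl fun i hi => ?_
    rw [Finset.mem_range] at hi
    show (ε ^ (i + (n - i) + 1) / (Nat.factorial (i + (n - i) + 1) : 𝕜)) •
        (A ^ (n - i) * B * (A + B) ^ i) = _
    rw [show i + (n - i) + 1 = n + 1 from by omega, show n + 1 - 1 - i = n - i from by omega]
  have step3 : ∑' n : ℕ, (ε ^ n / (Nat.factorial n : 𝕜)) • ((A + B) ^ n - A ^ n) =
      ∑' p : ℕ × ℕ, F p := by
    rw [Summable.tsum_eq_zero_add hD]
    simp only [pow_zero, sub_self, smul_zero, zero_add]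
    rw [step1]
    exact tsum_congr fun n => (step2 n).symm
  -- reindexing the double sum
  let eo : ℕ ≃ {n : ℕ // 1 ≤ n} :=
  { toFun := fun i => ⟨i + 1, by omega⟩
    invFun := fun n => (n : ℕ) - 1
    left_inv := fun i => by simp
    right_inv := fun n => Subtype.ext (by obtain ⟨n, hn⟩ := n; simp; omega) }
  have hinner : ∀ i : ℕ,
      (∑' (k : {k : ℕ // i + 1 ≤ k}),
        (ε ^ (k : ℕ) / (Nat.factorial (k : ℕ) : 𝕜)) •
          (A ^ ((k : ℕ) - (i + 1)) * B * (A + B) ^ ((i + 1) - 1))) =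
      ∑' j : ℕ, F (i, j) := by
    intro i
    let ei : ℕ ≃ {k : ℕ // i + 1 ≤ k} :=
    { toFun := fun j => ⟨i + 1 + j, by omega⟩
      invFun := fun k => (k : ℕ) - (i + 1)
      left_inv := fun j => by simp
      right_inv := fun k => Subtype.ext (by obtain ⟨k, hk⟩ := k; simp; omega) }
    rw [← Equiv.tsum_eq ei]
    refine tsum_congr fun j => ?_
    show (ε ^ (i + 1 + j) / (Nat.factorial (i + 1 + j) : 𝕜)) •
        (A ^ ((i + 1 + j) - (i + 1)) * B * (A + B) ^ ((i + 1) - 1)) = F (i, j)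
    rw [show (i + 1 + j) - (i + 1) = j from by omega, Nat.add_sub_cancel,
      show i + 1 + j = i + j + 1 from by omega]
  have hRHS : (∑' (α : {n : ℕ // 1 ≤ n}), ∑' (k : {k : ℕ // (α : ℕ) ≤ k}),
        (ε ^ (k : ℕ) / (Nat.factorial (k : ℕ) : 𝕜)) •
          (A ^ ((k : ℕ) - (α : ℕ)) * B * (A + B) ^ ((α : ℕ) - 1))) =
      ∑' p : ℕ × ℕ, F p := by
    rw [← Equiv.tsum_eq eo]
    rw [Summable.tsum_prod hF]
    exact tsum_congr fun i => hinner i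
  rw [← sub_eq_iff_eq_add', key2, step3, hRHS]
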